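/- For n odd and λ a partition with at most n−1 parts, P_{ρ_{n−1}+λ}(x_1,...,x_{n−1} | t) = ∏_{1≤i<j≤n−1}(x_i + x_j) · s_{λ+1^{n−1}}(x_1,...,x_{n−1} | t). -/

import Mathlib

open Finset

lemma prod_sym_perm {F : Type*} [CommMonoid F] {k : ℕ} (f : Fin k → Fin k → F)
    (hf : ∀ i j, f i j = f j i) (w : Equiv.Perm (Fin k)) :
    ∏ p ∈ Finset.univ.filter (fun p : Fin k × Fin k => p.1 < p.2), f (w p.1) (w p.2)
      = ∏ p ∈ Finset.univ.filter (fun p : Fin k × Fin k => p.1 < p.2), f p.1 p.2 := by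
  refine Finset.prod_nbij'
    (fun p => if w p.1 < w p.2 then (w p.1, w p.2) else (w p.2, w p.1))
    (fun q => if w⁻¹ q.1 < w⁻¹ q.2 then (w⁻¹ q.1, w⁻¹ q.2) else (w⁻¹ q.2, w⁻¹ q.1))
    ?_ ?_ ?_ ?_ ?_
  · intro p hp
    simp only [mem_filter, mem_univ, true_and] at hp ⊢
    have hne : w p.1 ≠ w p.2 := fun h => absurd (w.injective h) (ne_of_lt hp)
    rcases lt_or_gt_of_ne hne with h | h
    · simp [h]
    · simp [not_lt.mpr h.le, h]
  · intro q hq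
    simp only [mem_filter, mem_univ, true_and] at hq ⊢
    have hne : w⁻¹ q.1 ≠ w⁻¹ q.2 := fun h => absurd (w⁻¹.injective h) (ne_of_lt hq)
    rcases lt_or_gt_of_ne hne with h | h
    · simp only [Equiv.Perm.inv_def] at h; simp [h]
    · simp only [Equiv.Perm.inv_def] at h; simp [not_lt.mpr h.le, h]
  · intro p hp
    simp only [mem_filter, mem_univ, true_and] at hp
    by_cases h : w p.1 < w p.2 <;> simp [h, Equiv.symm_apply_apply, hp, not_lt.mpr hp.le]
  · intro q hq
    simp only [mem_filter, mem_univ, true_and] at hq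
    by_cases h : w⁻¹ q.1 < w⁻¹ q.2 <;> simp only [Equiv.Perm.inv_def] at h <;> simp [h, Equiv.apply_symm_apply, hq, not_lt.mpr hq.le]
  · intro p hp
    by_cases h : w p.1 < w p.2 <;> simp [h, hf]

theorem stmt_6 {F : Type*} [Field F] (n : ℕ) (hn : Odd n) (x : Fin (n - 1) → F) (t : ℕ → F)
    (lam : ℕ → ℕ) (hlam : Antitone lam) (hx : Function.Injective x) :
    ∑ w : Equiv.Perm (Fin (n - 1)),
        (∏ i : Fin (n - 1),
            ∏ m ∈ Finset.range ((n - 1 - (i : ℕ)) + lam (i : ℕ)), (x (w i) - t m))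
          * ∏ p ∈ Finset.univ.filter (fun p : Fin (n - 1) × Fin (n - 1) => p.1 < p.2),
              ((x (w p.1) + x (w p.2)) / (x (w p.1) - x (w p.2)))
      =
      (∏ p ∈ Finset.univ.filter (fun p : Fin (n - 1) × Fin (n - 1) => p.1 < p.2),
          (x p.1 + x p.2))
        * ∑ w : Equiv.Perm (Fin (n - 1)),
            (∏ i : Fin (n - 1),
                ∏ m ∈ Finset.range ((lam (i : ℕ) + 1) + (n - 2 - (i : ℕ))), (x (w i) - t m))
              * ∏ p ∈ Finset.univ.filter (fun p : Fin (n - 1) × Fin (n - 1) => p.1 < p.2),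
                  (x (w p.1) - x (w p.2))⁻¹ := by
  rw [Finset.mul_sum]
  refine Finset.sum_congr rfl fun w _ => ?_
  have h1 : (∏ i : Fin (n - 1),
      ∏ m ∈ Finset.range ((n - 1 - (i : ℕ)) + lam (i : ℕ)), (x (w i) - t m))
      = ∏ i : Fin (n - 1),
        ∏ m ∈ Finset.range ((lam (i : ℕ) + 1) + (n - 2 - (i : ℕ))), (x (w i) - t m) := by
    refine Finset.prod_congr rfl fun i _ => ?_
    have hi := i.isLt
    have he : (n - 1 - (i : ℕ)) + lam (i : ℕ) = (lam (i : ℕ) + 1) + (n - 2 - (i : ℕ)) := by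
      omega
    rw [he]
  have h2 : (∏ p ∈ Finset.univ.filter (fun p : Fin (n - 1) × Fin (n - 1) => p.1 < p.2),
      ((x (w p.1) + x (w p.2)) / (x (w p.1) - x (w p.2))))
      = (∏ p ∈ Finset.univ.filter (fun p : Fin (n - 1) × Fin (n - 1) => p.1 < p.2),
          (x (w p.1) + x (w p.2)))
        * ∏ p ∈ Finset.univ.filter (fun p : Fin (n - 1) × Fin (n - 1) => p.1 < p.2),
          (x (w p.1) - x (w p.2))⁻¹ := by
    rw [← Finset.prod_mul_distrib]
    exact Finset.prod_congr rfl fun p _ => div_eq_mul_inv _ _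
  have h3 : (∏ p ∈ Finset.univ.filter (fun p : Fin (n - 1) × Fin (n - 1) => p.1 < p.2),
      (x (w p.1) + x (w p.2)))
      = ∏ p ∈ Finset.univ.filter (fun p : Fin (n - 1) × Fin (n - 1) => p.1 < p.2),
        (x p.1 + x p.2) :=
    prod_sym_perm (fun i j => x i + x j) (fun i j => add_comm _ _) w
  rw [h1, h2, h3]
  ring
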